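/- Let x ∈ ℝ^K be deterministic, w ~ N(0, σ²I_K), y = x + w, and f : ℝ^K → ℝ^K a C¹ function satisfying the Stein identity E[⟨w, f(y)⟩] = σ² E[div f(y)]. Define ε = (1/K)[‖y‖² − Kσ² + ‖f(y)‖² − 2⟨y, f(y)⟩ + 2σ² div f(y)]. Then E[ε] = (1/K) E[‖x − f(y)‖²], i.e., ε is an unbiased estimator of the mean-square error. -/

import Mathlib

open MeasureTheory ProbabilityTheory Real Filter

lemma aux_exp_tendsto : Tendsto (fun x : ℝ => rexp (-(1/2) * x)) atTop (nhds 0) :=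
  Real.tendsto_exp_atBot.comp ((tendsto_id (α := ℝ)).const_mul_atTop_of_neg (by norm_num : -(1/2 : ℝ) < 0))

lemma aux_tendsto_atTop {b : ℝ} (hb : 0 < b) :
    Tendsto (fun x : ℝ => x * rexp (-b * x ^ 2)) atTop (nhds 0) := by
  have h := (rpow_mul_exp_neg_mul_sq_isLittleO_exp_neg hb 1).tendsto_zero_of_tendsto aux_exp_tendsto
  simpa [Real.rpow_one] using h

lemma aux_tendsto_atBot {b : ℝ} (hb : 0 < b) :
    Tendsto (fun x : ℝ => x * rexp (-b * x ^ 2)) atBot (nhds 0) := by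
  have h := ((aux_tendsto_atTop hb).comp tendsto_neg_atBot_atTop).neg
  simp only [Function.comp] at h
  have e : (fun x : ℝ => -(-x * rexp (-b * (-x) ^ 2))) = fun x : ℝ => x * rexp (-b * x ^ 2) := by
    funext x; ring_nf
  rw [e] at h
  simpa using h

lemma aux_exp_tendsto' {b : ℝ} (hb : 0 < b) :
    Tendsto (fun x : ℝ => rexp (-b * x ^ 2)) atTop (nhds 0) :=
  Real.tendsto_exp_atBot.comp <|
    ((tendsto_pow_atTop (two_ne_zero)).const_mul_atTop_of_neg (neg_lt_zero.2 hb))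

lemma aux_exp_tendsto'_bot {b : ℝ} (hb : 0 < b) :
    Tendsto (fun x : ℝ => rexp (-b * x ^ 2)) atBot (nhds 0) := by
  have h := (aux_exp_tendsto' hb).comp tendsto_neg_atBot_atTop
  simp only [Function.comp_def, neg_sq] at h
  exact h

lemma integrable_sq_exp {b : ℝ} (hb : 0 < b) :
    Integrable (fun x : ℝ => x ^ 2 * rexp (-b * x ^ 2)) := by
  have h := integrable_rpow_mul_exp_neg_mul_sq hb (by norm_num : (-1:ℝ) < 2)
  have e : (fun x : ℝ => x ^ (2:ℝ) * rexp (-b * x ^ 2)) = fun x : ℝ => x ^ 2 * rexp (-b * x ^ 2) := by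
    funext x; rw [show (2:ℝ) = ((2:ℕ):ℝ) by norm_num, Real.rpow_natCast]
  rwa [e] at h

lemma integral_id_mul_exp {b : ℝ} (hb : 0 < b) :
    ∫ x : ℝ, x * rexp (-b * x ^ 2) = 0 := by
  have hderiv : ∀ x : ℝ, HasDerivAt (fun y : ℝ => -(2*b)⁻¹ * rexp (-b * y ^ 2))
      (x * rexp (-b * x ^ 2)) x := by
    intro x
    have h1 : HasDerivAt (fun y : ℝ => -b * y ^ 2) (-b * (2 * x)) x := by
      simpa using ((hasDerivAt_pow 2 x).const_mul (-b))
    have h2 := (h1.exp).const_mul (-(2*b)⁻¹)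
    refine h2.congr_deriv ?_
    field_simp
  have hint : Integrable (fun x : ℝ => x * rexp (-b * x ^ 2)) := integrable_mul_exp_neg_mul_sq hb
  have hbot : Tendsto (fun x : ℝ => -(2*b)⁻¹ * rexp (-b * x ^ 2)) atBot (nhds 0) := by
    simpa using (aux_exp_tendsto'_bot hb).const_mul (-(2*b)⁻¹)
  have htop : Tendsto (fun x : ℝ => -(2*b)⁻¹ * rexp (-b * x ^ 2)) atTop (nhds 0) := by
    simpa using (aux_exp_tendsto' hb).const_mul (-(2*b)⁻¹)
  have := MeasureTheory.integral_of_hasDerivAt_of_tendsto hderiv hint hbot htop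
  simpa using this

lemma integral_sq_mul_exp {b : ℝ} (hb : 0 < b) :
    ∫ x : ℝ, x ^ 2 * rexp (-b * x ^ 2) = Real.sqrt (π / b) / (2 * b) := by
  have hderiv : ∀ x : ℝ, HasDerivAt (fun y : ℝ => y * rexp (-b * y ^ 2))
      (rexp (-b * x ^ 2) - 2 * b * (x ^ 2 * rexp (-b * x ^ 2))) x := by
    intro x
    have h1 : HasDerivAt (fun y : ℝ => -b * y ^ 2) (-b * (2 * x)) x := by
      simpa using ((hasDerivAt_pow 2 x).const_mul (-b))
    have h2 := (hasDerivAt_id x).mul h1.exp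
    simp only [id_eq] at h2
    refine h2.congr_deriv ?_
    ring
  have hint : Integrable (fun x : ℝ => rexp (-b * x ^ 2) - 2 * b * (x ^ 2 * rexp (-b * x ^ 2))) :=
    (integrable_exp_neg_mul_sq hb).sub ((integrable_sq_exp hb).const_mul (2 * b))
  have h0 := MeasureTheory.integral_of_hasDerivAt_of_tendsto hderiv hint
    (aux_tendsto_atBot hb) (aux_tendsto_atTop hb)
  rw [integral_sub (integrable_exp_neg_mul_sq hb) ((integrable_sq_exp hb).const_mul (2 * b)),
    integral_const_mul, integral_gaussian] at h0
  have hb' : (2 : ℝ) * b ≠ 0 := by positivity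
  field_simp at h0 ⊢
  linarith

section GaussMoments
variable (v : NNReal)

lemma gauss_pdf_expand (t : ℝ) :
    gaussianPDFReal 0 v t = (Real.sqrt (2 * π * v))⁻¹ * rexp (-(2 * (v:ℝ))⁻¹ * t ^ 2) := by
  rw [gaussianPDFReal]
  rcases eq_or_ne v 0 with rfl | hv
  · simp
  · have h : (v:ℝ) ≠ 0 := by exact_mod_cast hv
    congr 2
    field_simp
    ring

lemma gauss_integral_eq (hv : v ≠ 0) (g : ℝ → ℝ) :
    ∫ t, g t ∂(gaussianReal 0 v) = ∫ t, gaussianPDFReal 0 v t * g t := by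
  rw [gaussianReal_of_var_ne_zero 0 hv]
  have hm : Measurable fun t : ℝ => (gaussianPDFReal 0 v t).toNNReal :=
    (measurable_gaussianPDFReal 0 v).real_toNNReal
  have he : (volume.withDensity (gaussianPDF 0 v))
      = volume.withDensity (fun t => ((gaussianPDFReal 0 v t).toNNReal : ENNReal)) := rfl
  rw [he, integral_withDensity_eq_integral_smul hm]
  refine integral_congr_ae (Filter.Eventually.of_forall fun t => ?_)
  simp [NNReal.smul_def, Real.coe_toNNReal _ (gaussianPDFReal_nonneg 0 v t)]

lemma gauss_integrable_iff (hv : v ≠ 0) (g : ℝ → ℝ) :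
    Integrable g (gaussianReal 0 v) ↔
      Integrable (fun t => gaussianPDFReal 0 v t * g t) volume := by
  rw [gaussianReal_of_var_ne_zero 0 hv]
  have hm : Measurable fun t : ℝ => (gaussianPDFReal 0 v t).toNNReal :=
    (measurable_gaussianPDFReal 0 v).real_toNNReal
  have he : (volume.withDensity (gaussianPDF 0 v))
      = volume.withDensity (fun t => ((gaussianPDFReal 0 v t).toNNReal : ENNReal)) := rfl
  rw [he, integrable_withDensity_iff_integrable_smul hm]
  constructor <;> intro h <;> refine h.congr (Filter.Eventually.of_forall fun t => ?_) <;>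
    simp [NNReal.smul_def, Real.coe_toNNReal _ (gaussianPDFReal_nonneg 0 v t)]


lemma gauss_integrable_id : Integrable (fun t : ℝ => t) (gaussianReal 0 v) := by
  rcases eq_or_ne v 0 with rfl | hv
  · rw [gaussianReal_zero_var]
    exact (integrable_const ((0:ℝ))).congr (ae_eq_dirac (fun t : ℝ => t)).symm
  · rw [gauss_integrable_iff v hv]
    have hv' : (0:ℝ) < v := by positivity
    have hb : (0:ℝ) < (2*(v:ℝ))⁻¹ := by positivity
    refine (((integrable_mul_exp_neg_mul_sq hb).const_mul ((Real.sqrt (2*π*v))⁻¹)).congr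
      (Filter.Eventually.of_forall fun t => ?_))
    simp only [gauss_pdf_expand]; ring

lemma gauss_integrable_sq : Integrable (fun t : ℝ => t ^ 2) (gaussianReal 0 v) := by
  rcases eq_or_ne v 0 with rfl | hv
  · rw [gaussianReal_zero_var]
    exact (integrable_const (((0:ℝ))^2)).congr (ae_eq_dirac (fun t : ℝ => t^2)).symm
  · rw [gauss_integrable_iff v hv]
    have hv' : (0:ℝ) < v := by positivity
    have hb : (0:ℝ) < (2*(v:ℝ))⁻¹ := by positivity
    refine (((integrable_sq_exp hb).const_mul ((Real.sqrt (2*π*v))⁻¹)).congr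
      (Filter.Eventually.of_forall fun t => ?_))
    simp only [gauss_pdf_expand]; ring

lemma gauss_integral_id : ∫ t, t ∂(gaussianReal 0 v) = 0 := by
  rcases eq_or_ne v 0 with rfl | hv
  · rw [gaussianReal_zero_var]; simp
  · rw [gauss_integral_eq v hv]
    have hv' : (0:ℝ) < v := by positivity
    have hb : (0:ℝ) < (2*(v:ℝ))⁻¹ := by positivity
    have e : (fun t : ℝ => gaussianPDFReal 0 v t * t)
        = fun t : ℝ => (Real.sqrt (2*π*v))⁻¹ * (t * rexp (-(2*(v:ℝ))⁻¹ * t ^ 2)) := by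
      funext t; rw [gauss_pdf_expand]; ring
    rw [e, integral_const_mul, integral_id_mul_exp hb, mul_zero]

lemma gauss_integral_sq : ∫ t, t ^ 2 ∂(gaussianReal 0 v) = (v : ℝ) := by
  rcases eq_or_ne v 0 with rfl | hv
  · rw [gaussianReal_zero_var]; simp
  · rw [gauss_integral_eq v hv]
    have hv' : (0:ℝ) < v := by positivity
    have hb : (0:ℝ) < (2*(v:ℝ))⁻¹ := by positivity
    have e : (fun t : ℝ => gaussianPDFReal 0 v t * t ^ 2)
        = fun t : ℝ => (Real.sqrt (2*π*v))⁻¹ * (t ^ 2 * rexp (-(2*(v:ℝ))⁻¹ * t ^ 2)) := by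
      funext t; rw [gauss_pdf_expand]; ring
    rw [e, integral_const_mul, integral_sq_mul_exp hb]
    have h1 : π / (2*(v:ℝ))⁻¹ = 2 * π * v := by field_simp
    have h2 : (2 : ℝ) * (2*(v:ℝ))⁻¹ = (v:ℝ)⁻¹ := by
      rw [mul_inv, ← mul_assoc]
      norm_num
    rw [h1, h2]
    have hs : Real.sqrt (2*π*v) ≠ 0 := by
      refine ne_of_gt (Real.sqrt_pos.2 ?_)
      positivity
    field_simp

end GaussMoments

section PiEval
variable {n : ℕ} (ν : Fin n → Measure ℝ) [∀ i, IsProbabilityMeasure (ν i)]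

lemma pi_map_eval (k : Fin n) : (Measure.pi ν).map (fun w => w k) = ν k := by
  ext s hs
  rw [Measure.map_apply (measurable_pi_apply k) hs]
  have hp : (fun w : Fin n → ℝ => w k) ⁻¹' s
      = Set.pi Set.univ (Function.update (fun _ : Fin n => (Set.univ : Set ℝ)) k s) :=
    Set.eval_preimage
  rw [hp, Measure.pi_pi]
  rw [Finset.prod_eq_single k (fun i _ hik => by simp [Function.update_of_ne hik])
    (fun h => absurd (Finset.mem_univ k) h)]
  simp

lemma integral_eval (g : ℝ → ℝ) (hg : Measurable g) (k : Fin n) :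
    ∫ w, g (w k) ∂(Measure.pi ν) = ∫ t, g t ∂(ν k) := by
  rw [← pi_map_eval ν k,
    integral_map (measurable_pi_apply k).aemeasurable hg.aestronglyMeasurable]

lemma integrable_eval (g : ℝ → ℝ) (hg : Measurable g) (k : Fin n)
    (hgi : Integrable g (ν k)) :
    Integrable (fun w => g (w k)) (Measure.pi ν) := by
  have h := integrable_map_measure (μ := Measure.pi ν) (g := g)
    (f := fun w : Fin n → ℝ => w k) ?_ (measurable_pi_apply k).aemeasurable
  · rw [pi_map_eval ν k] at h
    exact h.mp hgi
  · rw [pi_map_eval ν k]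
    exact hg.aestronglyMeasurable

end PiEval

/-- SURE is an unbiased estimator of the MSE: if `x` is deterministic,
`w ~ N(0, σ²I_K)`, `y = x + w`, and the C¹ denoiser `f` satisfies the Stein identity,
then `ε = (1/K)[‖y‖² − Kσ² + ‖f(y)‖² − 2⟨y, f(y)⟩ + 2σ² div f(y)]` satisfies
`E[ε] = (1/K) E[‖x − f(y)‖²]`. -/
theorem sure_unbiased (K : ℕ) (hK : 0 < K) (σ : NNReal) (x : Fin K → ℝ)
    (f : (Fin K → ℝ) → (Fin K → ℝ)) (hf : ContDiff ℝ 1 f)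
    (μ : Measure (Fin K → ℝ))
    (hμ : μ = Measure.pi fun _ : Fin K => gaussianReal 0 (σ ^ 2))
    (divf : (Fin K → ℝ) → ℝ)
    (hdiv : ∀ y, divf y = ∑ k, fderiv ℝ f y (Pi.single k 1) k)
    (hstein : ∫ w, (∑ k, w k * f (x + w) k) ∂μ
        = (σ : ℝ) ^ 2 * ∫ w, divf (x + w) ∂μ)
    (hint₁ : Integrable (fun w => ∑ k, (x k + w k) ^ 2) μ)
    (hint₂ : Integrable (fun w => ∑ k, (f (x + w) k) ^ 2) μ)
    (hint₃ : Integrable (fun w => ∑ k, (x k + w k) * f (x + w) k) μ)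
    (hint₄ : Integrable (fun w => divf (x + w)) μ)
    (hint₅ : Integrable (fun w => ∑ k, (x k - f (x + w) k) ^ 2) μ) :
    ∫ w, ((1 : ℝ) / K) * ((∑ k, (x k + w k) ^ 2) - K * (σ : ℝ) ^ 2
        + (∑ k, (f (x + w) k) ^ 2) - 2 * (∑ k, (x k + w k) * f (x + w) k)
        + 2 * (σ : ℝ) ^ 2 * divf (x + w)) ∂μ
      = ((1 : ℝ) / K) * ∫ w, (∑ k, (x k - f (x + w) k) ^ 2) ∂μ := by
  have hPμ : IsProbabilityMeasure μ := by
    rw [hμ]; infer_instance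
  have hcast : ((σ ^ 2 : NNReal) : ℝ) = (σ : ℝ) ^ 2 := by push_cast; ring
  -- coordinate moments
  have hw1i : ∀ k : Fin K, Integrable (fun w : Fin K → ℝ => w k) μ := by
    intro k; rw [hμ]
    exact integrable_eval _ (fun t => t) measurable_id k (gauss_integrable_id _)
  have hw1 : ∀ k : Fin K, ∫ w, w k ∂μ = 0 := by
    intro k; rw [hμ, integral_eval _ (fun t => t) measurable_id k]
    exact gauss_integral_id _
  have hw2i : ∀ k : Fin K, Integrable (fun w : Fin K → ℝ => (w k) ^ 2) μ := by
    intro k; rw [hμ]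
    exact integrable_eval _ (fun t => t ^ 2) (measurable_id.pow_const 2) k (gauss_integrable_sq _)
  have hw2 : ∀ k : Fin K, ∫ w, (w k) ^ 2 ∂μ = (σ : ℝ) ^ 2 := by
    intro k; rw [hμ, integral_eval _ (fun t => t ^ 2) (measurable_id.pow_const 2) k,
      gauss_integral_sq, hcast]
  -- sums
  have hS1i : Integrable (fun w => ∑ k, x k * w k) μ :=
    integrable_finset_sum _ fun k _ => (hw1i k).const_mul (x k)
  have hS1 : ∫ w, (∑ k, x k * w k) ∂μ = 0 := by
    rw [integral_finset_sum _ fun k _ => (hw1i k).const_mul (x k)]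
    simp [integral_const_mul, hw1]
  have hS2i : Integrable (fun w => ∑ k, (w k) ^ 2) μ :=
    integrable_finset_sum _ fun k _ => hw2i k
  have hS2 : ∫ w, (∑ k, (w k) ^ 2) ∂μ = (K : ℝ) * (σ : ℝ) ^ 2 := by
    rw [integral_finset_sum _ fun k _ => hw2i k]
    simp [hw2, Finset.sum_const, mul_comm]
  have hxfi : Integrable (fun w => ∑ k, x k * f (x + w) k) μ := by
    have e : (fun w => ∑ k, x k * f (x + w) k)
        = fun w => ((∑ k, (x k) ^ 2) + (∑ k, (f (x + w) k) ^ 2)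
            - ∑ k, (x k - f (x + w) k) ^ 2) / 2 := by
      funext w
      rw [Finset.sum_congr rfl (fun k _ => show x k * f (x + w) k
          = ((x k) ^ 2 + (f (x + w) k) ^ 2 - (x k - f (x + w) k) ^ 2) / 2 by ring),
        ← Finset.sum_div, Finset.sum_sub_distrib, Finset.sum_add_distrib]
    rw [e]
    exact (((integrable_const _).add hint₂).sub hint₅).div_const 2
  have hS3i : Integrable (fun w => ∑ k, w k * f (x + w) k) μ := by
    have e : (fun w => ∑ k, w k * f (x + w) k)
        = fun w => (∑ k, (x k + w k) * f (x + w) k) - ∑ k, x k * f (x + w) k := by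
      funext w
      rw [← Finset.sum_sub_distrib]
      exact Finset.sum_congr rfl fun k _ => by ring
    rw [e]
    exact hint₃.sub hxfi
  -- pull out 1/K and reduce to equality of integrals
  rw [integral_const_mul]
  congr 1
  -- pointwise decomposition
  have key : ∀ w : Fin K → ℝ,
      (∑ k, (x k + w k) ^ 2) - K * (σ : ℝ) ^ 2
        + (∑ k, (f (x + w) k) ^ 2) - 2 * (∑ k, (x k + w k) * f (x + w) k)
        + 2 * (σ : ℝ) ^ 2 * divf (x + w)
      = (∑ k, (x k - f (x + w) k) ^ 2)
        + (2 * (∑ k, x k * w k) + (∑ k, (w k) ^ 2) - (K : ℝ) * (σ : ℝ) ^ 2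
            - 2 * (∑ k, w k * f (x + w) k) + 2 * (σ : ℝ) ^ 2 * divf (x + w)) := by
    intro w
    have e1 : (∑ k, (x k + w k) ^ 2)
        = (∑ k, (x k) ^ 2) + 2 * (∑ k, x k * w k) + ∑ k, (w k) ^ 2 := by
      rw [Finset.mul_sum, ← Finset.sum_add_distrib, ← Finset.sum_add_distrib]
      exact Finset.sum_congr rfl fun k _ => by ring
    have e2 : (∑ k, (x k + w k) * f (x + w) k)
        = (∑ k, x k * f (x + w) k) + ∑ k, w k * f (x + w) k := by
      rw [← Finset.sum_add_distrib]
      exact Finset.sum_congr rfl fun k _ => by ring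
    have e3 : (∑ k, (x k - f (x + w) k) ^ 2)
        = (∑ k, (x k) ^ 2) - 2 * (∑ k, x k * f (x + w) k) + ∑ k, (f (x + w) k) ^ 2 := by
      rw [Finset.mul_sum, ← Finset.sum_sub_distrib, ← Finset.sum_add_distrib]
      exact Finset.sum_congr rfl fun k _ => by ring
    rw [e1, e2, e3]
    ring
  rw [integral_congr_ae (Filter.Eventually.of_forall key)]
  have i4 : Integrable (fun w => 2 * (σ : ℝ) ^ 2 * divf (x + w)) μ :=
    hint₄.const_mul _
  have iA : Integrable (fun w => 2 * (∑ k, x k * w k)) μ := hS1i.const_mul 2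
  have iB : Integrable (fun w => 2 * (∑ k, x k * w k) + (∑ k, (w k) ^ 2)) μ :=
    iA.add hS2i
  have iC : Integrable (fun w => 2 * (∑ k, x k * w k) + (∑ k, (w k) ^ 2)
      - (K : ℝ) * (σ : ℝ) ^ 2) μ := iB.sub (integrable_const _)
  have i3 : Integrable (fun w => 2 * (∑ k, w k * f (x + w) k)) μ := hS3i.const_mul 2
  have iD : Integrable (fun w => 2 * (∑ k, x k * w k) + (∑ k, (w k) ^ 2)
      - (K : ℝ) * (σ : ℝ) ^ 2 - 2 * (∑ k, w k * f (x + w) k)) μ := iC.sub i3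
  have hRi : Integrable (fun w => 2 * (∑ k, x k * w k) + (∑ k, (w k) ^ 2)
      - (K : ℝ) * (σ : ℝ) ^ 2 - 2 * (∑ k, w k * f (x + w) k)
      + 2 * (σ : ℝ) ^ 2 * divf (x + w)) μ := iD.add i4
  rw [integral_add hint₅ hRi]
  have hR0 : ∫ w, (2 * (∑ k, x k * w k) + (∑ k, (w k) ^ 2)
      - (K : ℝ) * (σ : ℝ) ^ 2 - 2 * (∑ k, w k * f (x + w) k)
      + 2 * (σ : ℝ) ^ 2 * divf (x + w)) ∂μ = 0 := by
    rw [integral_add iD i4, integral_sub iC i3, integral_sub iB (integrable_const _),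
      integral_add iA hS2i, integral_const_mul, integral_const_mul, integral_const_mul,
      hS1, hS2, hstein, integral_const]
    simp
    rw [integral_const_mul]
    ring
  rw [hR0, add_zero]
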